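/- Let n ≥ 2 and let Q_n = ⟨a, t | [tat⁻¹, a] = 1, aⁿ = 1⟩. Then Q_n contains a subgroup isomorphic to ℤ/nℤ × ℤ/nℤ, and hence Q_n is not a one-relator group (since any torsion subgroup of a one-relator group is cyclic, being contained in a conjugate of the cyclic group generated by the root of the relator). -/

import Mathlib

open scoped commutatorElement

/-- The group `Q_n = ⟨a, t ∣ [tat⁻¹, a] = 1, aⁿ = 1⟩`, presented on two
generators `a` (encoded by `true`) and `t` (encoded by `false`). -/
def QnRels (n : ℕ) : Set (FreeGroup Bool) :=
  {⁅FreeGroup.of false * FreeGroup.of true * (FreeGroup.of false)⁻¹, FreeGroup.of true⁆,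
    (FreeGroup.of true) ^ n}

namespace Stmt18Aux

variable (n : ℕ)

/-- translation by (1,0) -/
def permA : Equiv.Perm (ZMod n × ZMod n) := Equiv.addLeft ((1 : ZMod n), (0 : ZMod n))
/-- swap -/
def permT : Equiv.Perm (ZMod n × ZMod n) := Equiv.prodComm (ZMod n) (ZMod n)

lemma addLeft_mul (x y : ZMod n × ZMod n) :
    (Equiv.addLeft x : Equiv.Perm (ZMod n × ZMod n)) * Equiv.addLeft y
      = Equiv.addLeft (x + y) := by
  ext z <;>
  simp [Equiv.Perm.mul_apply, Prod.fst_add, Prod.snd_add, add_assoc]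

lemma addLeft_pow (x : ZMod n × ZMod n) (k : ℕ) :
    (Equiv.addLeft x : Equiv.Perm (ZMod n × ZMod n)) ^ k = Equiv.addLeft (k • x) := by
  induction k with
  | zero => ext z <;> simp
  | succ k ih =>
      rw [pow_succ, ih, addLeft_mul, succ_nsmul]

lemma permTAT : permT n * permA n * (permT n)⁻¹
    = Equiv.addLeft ((0 : ZMod n), (1 : ZMod n)) := by
  ext z <;> simp [permA, permT, Equiv.Perm.mul_apply, Equiv.Perm.inv_def, add_comm]

def fgen : Bool → Equiv.Perm (ZMod n × ZMod n) := fun b => if b then permA n else permT n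

lemma frels : ∀ r ∈ QnRels n, FreeGroup.lift (fgen n) r = 1 := by
  intro r hr
  rcases hr with h | h
  · subst h
    simp only [map_commutatorElement, map_mul, map_inv, FreeGroup.lift_apply_of, fgen,
      if_pos, if_neg, Bool.false_eq_true, if_false, if_true]
    rw [commutatorElement_eq_one_iff_commute, permTAT]
    ext z <;> simp [permA, Equiv.Perm.mul_apply, add_assoc, add_comm, add_left_comm]
  · simp only [Set.mem_singleton_iff] at h
    subst h
    simp only [map_pow, FreeGroup.lift_apply_of, fgen, if_true]
    rw [permA, addLeft_pow]
    ext z <;> simp [ZMod.natCast_self, Prod.ext_iff]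

/-- the homomorphism Q_n → Perm -/
def phi : PresentedGroup (QnRels n) →* Equiv.Perm (ZMod n × ZMod n) :=
  PresentedGroup.toGroup (frels n)

def α : PresentedGroup (QnRels n) := PresentedGroup.of true
def τ : PresentedGroup (QnRels n) := PresentedGroup.of false
def β : PresentedGroup (QnRels n) := τ n * α n * (τ n)⁻¹

lemma mk_rel_one {r : FreeGroup Bool} (hr : r ∈ QnRels n) :
    PresentedGroup.mk (QnRels n) r = 1 :=
  (QuotientGroup.eq_one_iff _).mpr (Subgroup.subset_normalClosure hr)

lemma alpha_pow : (α n) ^ n = 1 := by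
  have := mk_rel_one n (show (FreeGroup.of true) ^ n ∈ QnRels n from Or.inr rfl)
  simpa [α, PresentedGroup.of, map_pow] using this

lemma beta_pow : (β n) ^ n = 1 := by
  have : (β n) ^ n = τ n * (α n) ^ n * (τ n)⁻¹ := by
    rw [β, conj_pow]
  rw [this, alpha_pow]; group

lemma commute_ab : Commute (α n) (β n) := by
  have := mk_rel_one n (show ⁅FreeGroup.of false * FreeGroup.of true * (FreeGroup.of false)⁻¹,
      FreeGroup.of true⁆ ∈ QnRels n from Or.inl rfl)
  rw [map_commutatorElement, commutatorElement_eq_one_iff_commute] at this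
  simp only [map_mul, map_inv] at this
  exact (this.symm)

lemma phi_alpha : phi n (α n) = permA n := PresentedGroup.toGroup.of (frels n)

lemma phi_beta : phi n (β n) = Equiv.addLeft ((0 : ZMod n), (1 : ZMod n)) := by
  have hτ : phi n (τ n) = permT n := PresentedGroup.toGroup.of (frels n)
  rw [β, map_mul, map_mul, map_inv, phi_alpha, hτ, permTAT]

end Stmt18Aux

open Stmt18Aux in
theorem stmt_18_part1 (n : ℕ) (hn : 2 ≤ n) :
    (∃ H : Subgroup (PresentedGroup (QnRels n)),
        Nonempty (H ≃* Multiplicative (ZMod n × ZMod n))) := by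
  haveI : NeZero n := ⟨by omega⟩
  set G := PresentedGroup (QnRels n)
  -- define ψ
  have hc := commute_ab n
  have hα := alpha_pow n
  have hβ := beta_pow n
  let f : Multiplicative (ZMod n × ZMod n) → G :=
    fun x => α n ^ (Multiplicative.toAdd x).1.val * β n ^ (Multiplicative.toAdd x).2.val
  have key : ∀ (g : G) (h : g ^ n = 1) (i j : ZMod n), g ^ (i + j).val = g ^ i.val * g ^ j.val := by
    intro g h i j
    rw [ZMod.val_add, ← pow_eq_pow_mod _ h, pow_add]
  have hmul : ∀ x y, f (x * y) = f x * f y := by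
    intro x y
    show α n ^ ((Multiplicative.toAdd x).1 + (Multiplicative.toAdd y).1).val *
        β n ^ ((Multiplicative.toAdd x).2 + (Multiplicative.toAdd y).2).val = _
    rw [key _ hα, key _ hβ]
    exact ((hc.symm.pow_pow (Multiplicative.toAdd x).2.val
      (Multiplicative.toAdd y).1.val).mul_mul_mul_comm _ _).symm
  let ψ : Multiplicative (ZMod n × ZMod n) →* G := MonoidHom.mk' f hmul
  have hinj : Function.Injective ψ := by
    rw [injective_iff_map_eq_one]
    intro x hx
    have h1 : phi n (ψ x) ((0 : ZMod n), (0 : ZMod n)) = ((0 : ZMod n), (0 : ZMod n)) := by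
      rw [hx, map_one]; rfl
    have h2 : phi n (ψ x) ((0 : ZMod n), (0 : ZMod n))
        = ((Multiplicative.toAdd x).1, (Multiplicative.toAdd x).2) := by
      show phi n (α n ^ (Multiplicative.toAdd x).1.val * β n ^ (Multiplicative.toAdd x).2.val)
          ((0 : ZMod n), (0 : ZMod n)) = _
      rw [map_mul, map_pow, map_pow, phi_alpha, phi_beta, permA, addLeft_pow, addLeft_pow]
      simp [Equiv.Perm.mul_apply, Prod.ext_iff, nsmul_eq_mul,
        ZMod.natCast_rightInverse _, ZMod.natCast_val, ZMod.cast_id]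
    rw [h1] at h2
    have hx0 : Multiplicative.toAdd x = 0 := by
      have := h2.symm
      rw [Prod.ext_iff] at this
      exact Prod.ext this.1 this.2
    have : x = Multiplicative.ofAdd 0 := by
      apply_fun Multiplicative.toAdd
      simpa using hx0
    simpa using this
  exact ⟨ψ.range, ⟨(MonoidHom.ofInjective hinj).symm⟩⟩

namespace Stmt18Aux

/-- Heisenberg group over `ZMod n`. -/
@[ext] structure Heis (n : ℕ) where
  x : ZMod n
  y : ZMod n
  z : ZMod n

namespace Heis
variable {n : ℕ}

instance : Mul (Heis n) := ⟨fun a b => ⟨a.x + b.x, a.y + b.y, a.z + b.z + a.x * b.y⟩⟩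
instance : One (Heis n) := ⟨⟨0, 0, 0⟩⟩
instance : Inv (Heis n) := ⟨fun a => ⟨-a.x, -a.y, a.x * a.y - a.z⟩⟩

@[simp] lemma mul_x (a b : Heis n) : (a * b).x = a.x + b.x := rfl
@[simp] lemma mul_y (a b : Heis n) : (a * b).y = a.y + b.y := rfl
@[simp] lemma mul_z (a b : Heis n) : (a * b).z = a.z + b.z + a.x * b.y := rfl
@[simp] lemma one_x : (1 : Heis n).x = 0 := rfl
@[simp] lemma one_y : (1 : Heis n).y = 0 := rfl
@[simp] lemma one_z : (1 : Heis n).z = 0 := rfl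
@[simp] lemma inv_x (a : Heis n) : (a⁻¹).x = -a.x := rfl
@[simp] lemma inv_y (a : Heis n) : (a⁻¹).y = -a.y := rfl
@[simp] lemma inv_z (a : Heis n) : (a⁻¹).z = a.x * a.y - a.z := rfl

instance : Group (Heis n) where
  mul_assoc a b c := by ext <;> simp <;> ring
  one_mul a := by ext <;> simp
  mul_one a := by ext <;> simp
  inv_mul_cancel a := by ext <;> simp <;> ring

/-- the symplectic-rotation automorphism of the Heisenberg group -/
def sigma : Heis n ≃* Heis n where
  toFun p := ⟨-p.y, p.x, p.z - p.x * p.y⟩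
  invFun p := ⟨p.y, -p.x, p.z - p.x * p.y⟩
  left_inv p := by ext <;> simp <;> ring
  right_inv p := by ext <;> simp <;> ring
  map_mul' p q := by ext <;> simp <;> ring

def A : Heis n := ⟨1, 0, 0⟩
def B : Heis n := ⟨0, 1, 0⟩
def C : Heis n := ⟨0, 0, -1⟩

lemma sigma_A : (sigma (n := n)) A = B := by ext <;> simp [sigma, A, B]

lemma commBA : ⁅(B : Heis n), (A : Heis n)⁆ = C := by
  ext <;> simp [commutatorElement_def, A, B, C]

lemma A_pow (k : ℕ) : (A : Heis n) ^ k = ⟨(k : ZMod n), 0, 0⟩ := by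
  induction k with
  | zero => ext <;> simp
  | succ k ih => rw [pow_succ, ih]; ext <;> simp [A] <;> push_cast <;> ring

lemma A_pow_n : (A : Heis n) ^ n = 1 := by
  rw [A_pow]; ext <;> simp

lemma C_central (p : Heis n) : p * C = C * p := by
  ext <;> simp [C] <;> ring

lemma sigma_C : (sigma (n := n)) C = C := by ext <;> simp [sigma, C]

lemma sigma_zpow_C (k : ℤ) : ((sigma (n := n)) ^ k) C = C := by
  induction k using Int.induction_on with
  | zero => rfl
  | succ k ih => rw [zpow_add, zpow_one, MulAut.mul_apply, sigma_C, ih]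
  | pred k ih =>
      have h : ((sigma (n := n) : MulAut (Heis n)) ^ (-1 : ℤ)) C = C := by
        rw [zpow_neg, zpow_one]
        exact (MulEquiv.symm_apply_eq _).mpr (sigma_C (n := n)).symm
      rw [sub_eq_add_neg, zpow_add, MulAut.mul_apply, h, ih]

end Heis

/-- The model group `E = Heis(n) ⋊ ℤ`. -/
def phiE (n : ℕ) : Multiplicative ℤ →* MulAut (Heis n) := zpowersHom _ Heis.sigma

def EGrp (n : ℕ) := SemidirectProduct (Heis n) (Multiplicative ℤ) (phiE n)

instance (n : ℕ) : Group (EGrp n) := by unfold EGrp; infer_instance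

open Heis SemidirectProduct in
lemma inlC_mem_center (n : ℕ) :
    (inl C : EGrp n) ∈ Subgroup.center (EGrp n) := by
  refine Subgroup.mem_center_iff.mpr fun g => ?_
  show (⟨g.left * (phiE n g.right) C, g.right * 1⟩ : EGrp n)
      = ⟨C * (phiE n (1 : Multiplicative ℤ)) g.left, 1 * g.right⟩
  have h1 : (phiE n g.right) C = C := by
    show ((zpowersHom (MulAut (Heis n)) sigma) g.right) C = C
    rw [zpowersHom_apply]
    exact sigma_zpow_C _
  have h2 : (phiE n (1 : Multiplicative ℤ)) g.left = g.left := by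
    rw [map_one]; rfl
  rw [h1, h2, mul_one, one_mul, ← C_central]

/-- The homomorphism from the free group on `Bool` to the model group. -/
def Theta (n : ℕ) : FreeGroup Bool →* EGrp n :=
  FreeGroup.lift (fun b => if b then SemidirectProduct.inl Heis.A
    else SemidirectProduct.inr (Multiplicative.ofAdd (1 : ℤ)))

open Heis SemidirectProduct in
lemma Theta_r1 (n : ℕ) :
    Theta n ⁅FreeGroup.of false * FreeGroup.of true * (FreeGroup.of false)⁻¹,
      FreeGroup.of true⁆ = inl C := by
  rw [map_commutatorElement]
  simp only [map_mul, map_inv, Theta, FreeGroup.lift_apply_of, if_true, if_neg (by simp :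
    ¬ (false = true))]
  have haut : (inr (Multiplicative.ofAdd (1:ℤ)) : EGrp n) * inl A
      * (inr (Multiplicative.ofAdd (1:ℤ)))⁻¹ = inl B := by
    rw [← map_inv, ← inl_aut]
    congr 1
    show ((zpowersHom (MulAut (Heis n)) sigma) (Multiplicative.ofAdd (1:ℤ))) A = B
    rw [zpowersHom_apply]
    simp only [toAdd_ofAdd, zpow_one]
    exact sigma_A
  refine (congrArg (fun y : EGrp n => @Bracket.bracket (EGrp n) (EGrp n) _ y ((inl : Heis n →* EGrp n) A)) haut).trans ?_
  have h3 := map_commutatorElement (inl : Heis n →* EGrp n) B A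
  rw [commBA] at h3
  exact h3.symm

open Heis SemidirectProduct in
lemma Theta_r2 (n : ℕ) : Theta n ((FreeGroup.of true) ^ n) = 1 := by
  rw [map_pow]
  simp only [Theta, FreeGroup.lift_apply_of, if_true]
  have h3 := map_pow (inl : Heis n →* EGrp n) A n
  rw [A_pow_n, map_one] at h3
  exact h3.symm

open Heis SemidirectProduct in
lemma Theta_center (n : ℕ) {g : FreeGroup Bool}
    (hg : g ∈ Subgroup.normalClosure (QnRels n)) :
    Theta n g ∈ Subgroup.center (EGrp n) := by
  haveI : ((Subgroup.center (EGrp n)).comap (Theta n)).Normal :=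
    Subgroup.Normal.comap inferInstance _
  suffices hle : Subgroup.normalClosure (QnRels n)
      ≤ (Subgroup.center (EGrp n)).comap (Theta n) by
    exact Subgroup.mem_comap.mp (hle hg)
  apply Subgroup.normalClosure_le_normal
  intro r hr
  rcases hr with h | h
  · subst h
    simp only [Subgroup.mem_comap, SetLike.mem_coe]
    rw [Theta_r1]
    exact inlC_mem_center n
  · simp only [Set.mem_singleton_iff] at h
    subst h
    simp only [Subgroup.mem_comap, SetLike.mem_coe]
    rw [Theta_r2]
    exact Subgroup.one_mem _

lemma Theta_kills (n : ℕ) {g : FreeGroup Bool}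
    (hg : g ∈ ⁅(⊤ : Subgroup (FreeGroup Bool)), Subgroup.normalClosure (QnRels n)⁆) :
    Theta n g = 1 := by
  revert g
  suffices h : ⁅(⊤ : Subgroup (FreeGroup Bool)), Subgroup.normalClosure (QnRels n)⁆
      ≤ (Theta n).ker by
    intro g hg; exact h hg
  rw [Subgroup.commutator_le]
  intro g₁ _ g₂ hg₂
  rw [MonoidHom.mem_ker, map_commutatorElement, commutatorElement_eq_one_iff_commute]
  exact Subgroup.mem_center_iff.mp (Theta_center n hg₂) _

/-- The key `δ`-lemma: an endomorphism `θ` of `F` which is the identity modulo a normal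
subgroup `R` fixes commutators modulo `⁅F, R⁆`. -/
lemma hopf_delta {F : Type*} [Group F] (R : Subgroup F) [R.Normal] (θ : F →* F)
    (hθ : ∀ x : F, θ x * x⁻¹ ∈ R) (f g : F) :
    θ ⁅f, g⁆ * ⁅f, g⁆⁻¹ ∈ ⁅(⊤ : Subgroup F), R⁆ := by
  set D := ⁅(⊤ : Subgroup F), R⁆ with hD
  haveI : D.Normal := Subgroup.commutator_normal ⊤ R
  have key : ∀ a b c d : F, ((a * b) * (c * d)⁻¹)⁻¹ * ((a * c⁻¹) * (b * d⁻¹))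
      = ⁅c, (b * d⁻¹)⁻¹⁆ := by intro a b c d; group
  have key2 : ∀ a b : F, (a * b)⁻¹ * (b * a) = ⁅b⁻¹, a⁻¹⁆ := by intro a b; group
  have hmul : ∀ x y : F, ((θ (x * y) * (x * y)⁻¹ : F) : F ⧸ D)
      = ((θ x * x⁻¹ : F) : F ⧸ D) * ((θ y * y⁻¹ : F) : F ⧸ D) := by
    intro x y
    rw [← QuotientGroup.mk_mul, QuotientGroup.eq, map_mul, key]
    exact Subgroup.commutator_mem_commutator (Subgroup.mem_top _) (Subgroup.inv_mem _ (hθ y))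
  let η : F →* F ⧸ D := MonoidHom.mk' (fun x => ((θ x * x⁻¹ : F) : F ⧸ D)) hmul
  have hcomm : ∀ x y : F, Commute (η x) (η y) := by
    intro x y
    show ((θ x * x⁻¹ : F) : F ⧸ D) * ((θ y * y⁻¹ : F) : F ⧸ D)
        = ((θ y * y⁻¹ : F) : F ⧸ D) * ((θ x * x⁻¹ : F) : F ⧸ D)
    rw [← QuotientGroup.mk_mul, ← QuotientGroup.mk_mul, QuotientGroup.eq, key2]
    exact Subgroup.commutator_mem_commutator (Subgroup.mem_top _)
      (Subgroup.inv_mem _ (hθ x))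
  have : η ⁅f, g⁆ = 1 := by
    rw [map_commutatorElement, commutatorElement_eq_one_iff_commute]
    exact hcomm f g
  exact (QuotientGroup.eq_one_iff _).mp this

/-- If `x` is in the normal closure of `{w}` and dies in an abelian quotient where `w` has
infinite order, then `x ∈ ⁅F, ⟪w⟫⁆`. -/
lemma mem_commutator_of_rel {F A : Type*} [Group F] [CommGroup A] (w : F) (μ : F →* A)
    (hfree : ∀ k : ℤ, μ w ^ k = 1 → k = 0) {x : F}
    (hxR : x ∈ Subgroup.normalClosure {w}) (hxμ : μ x = 1) :
    x ∈ ⁅(⊤ : Subgroup F), Subgroup.normalClosure {w}⁆ := by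
  set R := Subgroup.normalClosure {w} with hR
  set D := ⁅(⊤ : Subgroup F), R⁆ with hD
  haveI : D.Normal := Subgroup.commutator_normal ⊤ R
  have hwR : w ∈ R := Subgroup.subset_normalClosure rfl
  have hcent : ((w : F) : F ⧸ D) ∈ Subgroup.center (F ⧸ D) := by
    refine Subgroup.mem_center_iff.mpr fun q => ?_
    obtain ⟨p, rfl⟩ := QuotientGroup.mk_surjective q
    rw [← QuotientGroup.mk_mul, ← QuotientGroup.mk_mul, QuotientGroup.eq]
    have : (p * w)⁻¹ * (w * p) = ⁅w⁻¹, p⁻¹⁆ := by group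
    rw [this, hD, Subgroup.commutator_comm]
    exact Subgroup.commutator_mem_commutator (Subgroup.inv_mem _ hwR) (Subgroup.mem_top _)
  haveI hzn : (Subgroup.zpowers ((w : F) : F ⧸ D)).Normal := by
    constructor
    intro a ha g
    have hac : a ∈ Subgroup.center (F ⧸ D) := Subgroup.zpowers_le.mpr hcent ha
    have : g * a = a * g := (Subgroup.mem_center_iff.mp hac g)
    rw [show g * a * g⁻¹ = a from by rw [this]; group]
    exact ha
  have himg : ((x : F) : F ⧸ D) ∈ Subgroup.zpowers ((w : F) : F ⧸ D) := by
    have hmap : Subgroup.map (QuotientGroup.mk' D) R ≤ Subgroup.zpowers ((w : F) : F ⧸ D) := by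
      rw [hR, Subgroup.map_normalClosure _ _ (QuotientGroup.mk'_surjective D)]
      apply Subgroup.normalClosure_le_normal
      rw [Set.image_singleton]
      exact Set.singleton_subset_iff.mpr (Subgroup.mem_zpowers _)
    exact hmap ⟨x, hxR, rfl⟩
  obtain ⟨k, hk⟩ := Subgroup.mem_zpowers_iff.mp himg
  have hDker : D ≤ μ.ker := by
    rw [hD, Subgroup.commutator_le]
    intro g₁ _ g₂ _
    rw [MonoidHom.mem_ker, map_commutatorElement, commutatorElement_eq_one_iff_commute]
    exact Commute.all _ _
  set μbar : F ⧸ D →* A := QuotientGroup.lift D μ hDker with hμbar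
  have hμw : μ w ^ k = 1 := by
    have h1 : μbar (((w : F) : F ⧸ D) ^ k) = μ w ^ k := by
      rw [map_zpow]
      norm_num [hμbar]
    rw [← h1, hk]
    show μbar ((x : F) : F ⧸ D) = 1
    rw [hμbar]
    simpa using hxμ
  have hk0 : k = 0 := hfree k hμw
  subst hk0
  have : ((x : F) : F ⧸ D) = 1 := by rw [← hk, zpow_zero]
  exact (QuotientGroup.eq_one_iff _).mp this
end Stmt18Aux

namespace Stmt18Aux

lemma tf_finsupp {S : Type} (v : S →₀ ℤ) (k : ℤ) (hv : v ≠ 0) (h : k • v = 0) : k = 0 := by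
  by_contra hk
  apply hv
  ext s
  have h2 : (k • v) s = (0 : S →₀ ℤ) s := by rw [h]
  rw [Finsupp.smul_apply, Finsupp.coe_zero, Pi.zero_apply, smul_eq_mul] at h2
  rcases mul_eq_zero.mp h2 with h' | h'
  · exact absurd h' hk
  · simpa using h'

theorem stmt_18_not_one_relator (n : ℕ) (hn : 2 ≤ n) :
    ¬∃ (S : Type) (w : FreeGroup S),
      Nonempty (PresentedGroup (QnRels n) ≃* PresentedGroup ({w} : Set (FreeGroup S))) := by
  haveI : NeZero n := ⟨by omega⟩
  haveI : Fact (1 < n) := ⟨by omega⟩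
  rintro ⟨S, w, ⟨e⟩⟩
  set Q := PresentedGroup (QnRels n)
  set G := PresentedGroup ({w} : Set (FreeGroup S))
  set p₁ : FreeGroup Bool →* G := e.toMonoidHom.comp (PresentedGroup.mk (QnRels n)) with hp₁
  set p₂ : FreeGroup S →* G := PresentedGroup.mk {w} with hp₂
  have hp₁surj : Function.Surjective p₁ :=
    e.surjective.comp (PresentedGroup.mk_surjective _)
  have hp₂surj : Function.Surjective p₂ := PresentedGroup.mk_surjective _
  have hker₁ : ∀ x, p₁ x = 1 ↔ x ∈ Subgroup.normalClosure (QnRels n) := by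
    intro x
    rw [hp₁, MonoidHom.comp_apply]
    show e (PresentedGroup.mk (QnRels n) x) = 1 ↔ _
    rw [MulEquiv.map_eq_one_iff]
    exact QuotientGroup.eq_one_iff x
  have hker₂ : ∀ x, p₂ x = 1 ↔ x ∈ Subgroup.normalClosure ({w} : Set (FreeGroup S)) := by
    intro x
    exact QuotientGroup.eq_one_iff x
  set μ₂ : FreeGroup S →* Multiplicative (S →₀ ℤ) :=
    FreeGroup.lift (fun s => Multiplicative.ofAdd (Finsupp.single s (1:ℤ))) with hμ₂
  by_cases hμw : μ₂ w = 1
  · -- `w` has zero exponent vector: contradiction with torsion in abelianization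
    -- the character of `Q` sending `a` to `1 : ZMod n` and `t` to `0`
    have hrels : ∀ r ∈ QnRels n, FreeGroup.lift
        (fun b => if b then Multiplicative.ofAdd (1 : ZMod n) else 1) r = 1 := by
      intro r hr
      rcases hr with h | h
      · subst h
        rw [map_commutatorElement, commutatorElement_eq_one_iff_commute]
        exact Commute.all _ _
      · simp only [Set.mem_singleton_iff] at h
        subst h
        rw [map_pow, FreeGroup.lift_apply_of, if_pos rfl]
        apply Multiplicative.toAdd.injective
        rw [toAdd_pow]
        simp [nsmul_eq_mul]
    set χ : Q →* Multiplicative (ZMod n) := PresentedGroup.toGroup hrels with hχ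
    set α : Q := PresentedGroup.of true with hα
    have hαn : α ^ n = 1 := by
      have h1 : PresentedGroup.mk (QnRels n) ((FreeGroup.of true) ^ n) = 1 :=
        (QuotientGroup.eq_one_iff _).mpr
          (Subgroup.subset_normalClosure (Or.inr rfl))
      exact (map_pow _ _ _).symm.trans h1
    set g : G := e α with hg
    have hgn : g ^ n = 1 := by rw [hg, ← map_pow, hαn, map_one]
    set f₂ : FreeGroup S := Function.surjInv hp₂surj g with hf₂
    have hpf₂ : p₂ f₂ = g := Function.surjInv_eq hp₂surj g
    have hf₂R : f₂ ^ n ∈ Subgroup.normalClosure ({w} : Set (FreeGroup S)) := by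
      rw [← hker₂, map_pow, hpf₂, hgn]
    have hRker : Subgroup.normalClosure ({w} : Set (FreeGroup S)) ≤ μ₂.ker :=
      Subgroup.normalClosure_le_normal (by
        intro x hx
        rcases hx with rfl
        exact hμw)
    have hμf₂n : μ₂ f₂ ^ n = 1 := by
      rw [← map_pow]
      exact hRker hf₂R
    have hμf₂ : μ₂ f₂ = 1 := by
      apply Multiplicative.toAdd.injective
      have h1 : Multiplicative.toAdd (μ₂ f₂ ^ n) = 0 := by rw [hμf₂n]; rfl
      rw [toAdd_pow] at h1
      by_contra hne
      have hvne : Multiplicative.toAdd (μ₂ f₂) ≠ 0 := fun hc => hne (by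
        simpa using hc)
      have := tf_finsupp _ (n : ℤ) hvne (by rw [natCast_zsmul]; exact h1)
      omega
    -- now evaluate the character
    set ν : FreeGroup S →* Multiplicative (ZMod n) :=
      χ.comp (e.symm.toMonoidHom.comp p₂) with hν
    set L : (S →₀ ℤ) →+ ZMod n :=
      Finsupp.liftAddHom (fun s => zmultiplesHom (ZMod n)
        (Multiplicative.toAdd (ν (FreeGroup.of s)))) with hL
    have hgen : ∀ s, μ₂ (FreeGroup.of s)
        = Multiplicative.ofAdd (Finsupp.single s (1:ℤ)) := by
      intro s; rw [hμ₂]; exact FreeGroup.lift_apply_of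
    have hfact : ν = (AddMonoidHom.toMultiplicative L).comp μ₂ := by
      apply FreeGroup.ext_hom
      intro s
      simp only [MonoidHom.comp_apply]
      rw [hgen s]
      show χ (e.symm (p₂ (FreeGroup.of s)))
          = Multiplicative.ofAdd (L (Finsupp.single s (1:ℤ)))
      rw [hL, Finsupp.liftAddHom_apply_single, zmultiplesHom_apply, one_zsmul,
        ofAdd_toAdd, hν]
      rfl
    have hν1 : ν f₂ = 1 := by rw [hfact, MonoidHom.comp_apply, hμf₂, map_one]
    have hν2 : ν f₂ = Multiplicative.ofAdd ((1 : ZMod n)) := by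
      have h0 : ν f₂ = χ (e.symm (p₂ f₂)) := by rw [hν]; rfl
      rw [h0, hpf₂, hg, MulEquiv.symm_apply_apply, hα, hχ, PresentedGroup.toGroup.of]
      rw [if_pos rfl]
    rw [hν2] at hν1
    have : (1 : ZMod n) = 0 := by
      have := congrArg Multiplicative.toAdd hν1
      simpa using this
    exact one_ne_zero this
  · -- `w` has non-zero exponent vector: Hopf-formula argument
    set r : FreeGroup Bool := ⁅FreeGroup.of false * FreeGroup.of true
        * (FreeGroup.of false)⁻¹, FreeGroup.of true⁆ with hr
    have hrR₁ : r ∈ Subgroup.normalClosure (QnRels n) :=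
      Subgroup.subset_normalClosure (Or.inl rfl)
    set φmap : FreeGroup Bool →* FreeGroup S :=
      FreeGroup.lift (fun b => Function.surjInv hp₂surj (p₁ (FreeGroup.of b))) with hφm
    have hφgen : ∀ b, φmap (FreeGroup.of b)
        = Function.surjInv hp₂surj (p₁ (FreeGroup.of b)) := by
      intro b; rw [hφm]; exact FreeGroup.lift_apply_of
    have hφ : ∀ x, p₂ (φmap x) = p₁ x := by
      intro x
      have h0 : p₂.comp φmap = p₁ := by
        apply FreeGroup.ext_hom
        intro b
        rw [MonoidHom.comp_apply, hφgen b]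
        exact Function.surjInv_eq hp₂surj _
      exact DFunLike.congr_fun h0 x
    set ψmap : FreeGroup S →* FreeGroup Bool :=
      FreeGroup.lift (fun s => Function.surjInv hp₁surj (p₂ (FreeGroup.of s))) with hψm
    have hψgen : ∀ s, ψmap (FreeGroup.of s)
        = Function.surjInv hp₁surj (p₂ (FreeGroup.of s)) := by
      intro s; rw [hψm]; exact FreeGroup.lift_apply_of
    have hψ : ∀ x, p₁ (ψmap x) = p₂ x := by
      intro x
      have h0 : p₁.comp ψmap = p₂ := by
        apply FreeGroup.ext_hom
        intro s
        rw [MonoidHom.comp_apply, hψgen s]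
        exact Function.surjInv_eq hp₁surj _
      exact DFunLike.congr_fun h0 x
    set θ : FreeGroup Bool →* FreeGroup Bool := ψmap.comp φmap with hθm
    have hθ : ∀ x, p₁ (θ x) = p₁ x := by
      intro x
      exact (hψ (φmap x)).trans (hφ x)
    have hθR : ∀ x, θ x * x⁻¹ ∈ Subgroup.normalClosure (QnRels n) := by
      intro x
      rw [← hker₁, map_mul, map_inv, hθ]
      group
    have hφrR₂ : φmap r ∈ Subgroup.normalClosure ({w} : Set (FreeGroup S)) := by
      rw [← hker₂, hφ]
      exact (hker₁ r).mpr hrR₁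
    have hφrμ : μ₂ (φmap r) = 1 := by
      rw [hr, map_commutatorElement, map_commutatorElement,
        commutatorElement_eq_one_iff_commute]
      exact Commute.all _ _
    have hfree : ∀ k : ℤ, (μ₂ w) ^ k = 1 → k = 0 := by
      intro k hk
      have h1 : Multiplicative.toAdd (μ₂ w ^ k) = 0 := by rw [hk]; rfl
      rw [toAdd_zpow] at h1
      refine tf_finsupp _ k (fun hc => hμw ?_) h1
      apply Multiplicative.toAdd.injective
      simpa using hc
    have hφrD₂ := mem_commutator_of_rel w μ₂ hfree hφrR₂ hφrμ
    have hθrD₁ : θ r ∈ ⁅(⊤ : Subgroup (FreeGroup Bool)),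
        Subgroup.normalClosure (QnRels n)⁆ := by
      have hmem : ψmap (φmap r) ∈ Subgroup.map ψmap
          ⁅(⊤ : Subgroup (FreeGroup S)), Subgroup.normalClosure ({w} : Set (FreeGroup S))⁆ :=
        Subgroup.mem_map_of_mem _ hφrD₂
      rw [Subgroup.map_commutator] at hmem
      refine Subgroup.commutator_mono le_top ?_ hmem
      rintro y ⟨x, hx, rfl⟩
      rw [← hker₁, hψ]
      exact (hker₂ x).mpr hx
    have hdelta : θ r * r⁻¹ ∈ ⁅(⊤ : Subgroup (FreeGroup Bool)),
        Subgroup.normalClosure (QnRels n)⁆ := by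
      rw [hr]
      exact hopf_delta _ θ hθR _ _
    have hrD₁ : r ∈ ⁅(⊤ : Subgroup (FreeGroup Bool)),
        Subgroup.normalClosure (QnRels n)⁆ := by
      have hmul := mul_mem (inv_mem hdelta) hθrD₁
      have : (θ r * r⁻¹)⁻¹ * θ r = r := by group
      rwa [this] at hmul
    have h1 : Theta n r = 1 := Theta_kills n hrD₁
    rw [hr, Theta_r1] at h1
    have h2 : Heis.C = (1 : Heis n) := SemidirectProduct.inl_injective h1
    have h3 : (-1 : ZMod n) = 0 := congrArg Heis.z h2
    rw [neg_eq_zero] at h3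
    exact one_ne_zero h3

end Stmt18Aux

/-- for `n ≥ 2`, the group `Q_n = ⟨a, t ∣ [tat⁻¹, a] = aⁿ = 1⟩`
contains a subgroup isomorphic to `ℤ/nℤ × ℤ/nℤ`, and `Q_n` is not a one-relator
group (a one-relator group being a quotient of a free group by the normal
closure of a single element). -/
theorem stmt_18 (n : ℕ) (hn : 2 ≤ n) :
    (∃ H : Subgroup (PresentedGroup (QnRels n)),
        Nonempty (H ≃* Multiplicative (ZMod n × ZMod n))) ∧
      ¬∃ (S : Type) (w : FreeGroup S),
        Nonempty (PresentedGroup (QnRels n) ≃* PresentedGroup ({w} : Set (FreeGroup S))) :=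
  ⟨stmt_18_part1 n hn, Stmt18Aux.stmt_18_not_one_relator n hn⟩
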